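/- Let f be a probability density on ℝ and F(x) = ∫_{−∞}^x f(t)dt its distribution function. Assume that for some ε > 0, |t|^{1+ε} f(t) → 0 as |t| → ∞. For the location model p(x|θ) = f(x−θ) (θ ∈ ℝ) with prior π(θ) = 1, restricted priors π_i(θ) = (2i)^{-1} 1_{[−i,i]}(θ) and prior-predictive densities p_i(x) = (2i)^{-1}(F(x+i) − F(x−i)), the expected logarithmic discrepancy between the formal posterior π(θ|x) = f(x−θ) and the restricted posteriors π_i(θ|x) equals −(1/(2i)) ∫_ℝ (F(x+i) − F(x−i)) log(F(x+i) − F(x−i)) dx (with 0·log 0 := 0), and this quantity converges to 0 as i → ∞. Consequently π(θ) = 1 is a permissible prior for this location model. -/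

import Mathlib

open MeasureTheory Filter

lemma aux_entropy {u δ : ℝ} (hu0 : 0 ≤ u) (hu1 : u ≤ 1) (hδ0 : 0 < δ) (hδ1 : δ < 1) :
    |u * Real.log u| ≤ u ^ (1 - δ) / δ := by
  rcases hu0.eq_or_lt with h | h
  · rw [← h, Real.zero_rpow (by linarith : (1:ℝ) - δ ≠ 0)]
    simp
  · have hlog : Real.log u ≤ 0 := Real.log_nonpos hu0 hu1
    have h1 : |u * Real.log u| = u * (-Real.log u) := by
      rw [abs_of_nonpos (mul_nonpos_of_nonneg_of_nonpos hu0 hlog)]; ring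
    have h2 : -Real.log u = Real.log u⁻¹ := (Real.log_inv u).symm
    have h3 : Real.log u⁻¹ ≤ (u⁻¹) ^ δ / δ := Real.log_le_rpow_div (by positivity) hδ0
    have h4 : (u⁻¹) ^ δ = u ^ (-δ) := by
      rw [← Real.rpow_neg_one u, ← Real.rpow_mul hu0]
      norm_num
    have h5 : u * (u ^ (-δ) / δ) = u ^ (1 - δ) / δ := by
      rw [show u * (u ^ (-δ) / δ) = (u ^ (1:ℝ) * u ^ (-δ)) / δ by rw [Real.rpow_one]; ring,
        ← Real.rpow_add h, ← sub_eq_add_neg]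
    calc |u * Real.log u| = u * (-Real.log u) := h1
      _ ≤ u * ((u⁻¹) ^ δ / δ) := by
          apply mul_le_mul_of_nonneg_left _ hu0
          rw [h2]; exact h3
      _ = u ^ (1 - δ) / δ := by rw [h4]; exact h5

lemma aux_entropy2 {u : ℝ} (hu0 : 0 ≤ u) (hu1 : u ≤ 1) : |u * Real.log u| ≤ 2 := by
  have := aux_entropy hu0 hu1 (by norm_num : (0:ℝ) < 1/2) (by norm_num)
  have h2 : u ^ ((1:ℝ) - 1/2) ≤ 1 := Real.rpow_le_one hu0 hu1 (by norm_num)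
  calc |u * Real.log u| ≤ u ^ ((1:ℝ) - 1/2) / (1/2) := this
    _ ≤ 1 / (1/2) := by gcongr
    _ = 2 := by norm_num

lemma aux_subst_integral {φ : ℝ → ℝ} (hφ : MeasurePreserving φ (volume : Measure ℝ) volume)
    (hemb : MeasurableEmbedding φ) (g : ℝ → ℝ) (s : Set ℝ) :
    ∫ x in φ ⁻¹' s, g (φ x) = ∫ y in s, g y := by
  have := hemb.setIntegral_map (μ := volume) g s
  rw [hφ.map_eq] at this
  exact this.symm

lemma aux_subst_integrable {φ : ℝ → ℝ} (hφ : MeasurePreserving φ (volume : Measure ℝ) volume)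
    (hemb : MeasurableEmbedding φ) {g : ℝ → ℝ} {s : Set ℝ} (hs : MeasurableSet s)
    (hg : IntegrableOn g s) : IntegrableOn (fun x => g (φ x)) (φ ⁻¹' s) := by
  have h1 : IntegrableOn g s (Measure.map φ volume) := by rwa [hφ.map_eq]
  unfold IntegrableOn at h1 ⊢
  rw [Measure.restrict_map hφ.measurable hs] at h1
  exact hemb.integrable_map_iff.mp h1

lemma aux_mp_sub (n : ℝ) : MeasurePreserving (fun x : ℝ => x - n) volume volume := by
  simpa [sub_eq_add_neg] using measurePreserving_add_right (volume : Measure ℝ) (-n)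

lemma aux_emb_sub (n : ℝ) : MeasurableEmbedding (fun x : ℝ => x - n) := by
  have : (fun x : ℝ => x - n) = fun x => x + (-n) := by funext x; ring
  rw [this]
  exact (Homeomorph.addRight (-n)).isClosedEmbedding.measurableEmbedding

lemma aux_pre_sub (n c : ℝ) : (fun x : ℝ => x - n) ⁻¹' (Set.Ioi c) = Set.Ioi (c + n) := by
  ext x
  simp only [Set.mem_preimage, Set.mem_Ioi]
  constructor <;> intro h <;> linarith

lemma aux_mp_negsub (n : ℝ) : MeasurePreserving (fun x : ℝ => -x - n) volume volume := by
  have := (aux_mp_sub n).comp (Measure.measurePreserving_neg (volume : Measure ℝ))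
  exact this

lemma aux_emb_negsub (n : ℝ) : MeasurableEmbedding (fun x : ℝ => -x - n) := by
  have hneg : MeasurableEmbedding (fun x : ℝ => -x) :=
    (Homeomorph.neg ℝ).isClosedEmbedding.measurableEmbedding
  have := (aux_emb_sub n).comp hneg
  exact this

lemma aux_pre_negsub (n c : ℝ) : (fun x : ℝ => -x - n) ⁻¹' (Set.Ioi c) = Set.Iio (-(c + n)) := by
  ext x
  simp only [Set.mem_preimage, Set.mem_Ioi, Set.mem_Iio]
  constructor <;> intro h <;> linarith

set_option maxHeartbeats 1000000 in
lemma part3core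
    (f : ℝ → ℝ) (hf_meas : Measurable f) (hf_nonneg : ∀ t, 0 ≤ f t)
    (hf_dens : ∫ t, f t = 1)
    (F : ℝ → ℝ)
    (ε : ℝ) (hε : 0 < ε)
    (htail : Tendsto (fun t : ℝ => |t| ^ (1 + ε) * f t) (cocompact ℝ) (nhds 0))
    (hf_int : Integrable f)
    (hGioc : ∀ a b : ℝ, a ≤ b → F b - F a = ∫ t in Set.Ioc a b, f t) :
    Tendsto
      (fun i : ℕ =>
        -(1 / (2 * (i : ℝ))) *
          ∫ x : ℝ, (F (x + i) - F (x - i)) * Real.log (F (x + i) - F (x - i)))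
      atTop (nhds 0) := by
  -- basic bounds on increments of F
  have hG0 : ∀ a b : ℝ, a ≤ b → 0 ≤ F b - F a := by
    intro a b hab
    rw [hGioc a b hab]
    exact setIntegral_nonneg measurableSet_Ioc fun t _ => hf_nonneg t
  have hG1 : ∀ a b : ℝ, a ≤ b → F b - F a ≤ 1 := by
    intro a b hab
    rw [hGioc a b hab, ← hf_dens]
    exact setIntegral_le_integral hf_int (Filter.Eventually.of_forall hf_nonneg)
  have hFmono : Monotone F := by
    intro a b hab
    have := hG0 a b hab
    linarith
  have hFmeas : Measurable F := hFmono.measurable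
  have hBmeas : ∀ c : ℝ,
      Measurable (fun x : ℝ => (F (x + c) - F (x - c)) * Real.log (F (x + c) - F (x - c))) := by
    intro c
    have h1 : Measurable fun x : ℝ => F (x + c) - F (x - c) :=
      (hFmeas.comp (measurable_id.add_const _)).sub (hFmeas.comp (measurable_id.sub_const _))
    exact h1.mul (Real.measurable_log.comp h1)
  -- tail bound on f
  obtain ⟨M, hM1, hMtail⟩ : ∃ M : ℝ, 1 ≤ M ∧ ∀ t : ℝ, M ≤ |t| → f t ≤ |t| ^ (-(1 + ε)) := by
    have h := Metric.tendsto_nhds.mp htail 1 one_pos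
    rw [(hasBasis_cocompact).eventually_iff] at h
    obtain ⟨K, hK, hKt⟩ := h
    obtain ⟨r, hr⟩ := hK.isBounded.subset_closedBall 0
    refine ⟨max 1 (r + 1), le_max_left _ _, ?_⟩
    intro t ht
    have htr : r + 1 ≤ |t| := le_trans (le_max_right 1 (r + 1)) ht
    have ht1 : (1 : ℝ) ≤ |t| := le_trans (le_max_left 1 (r + 1)) ht
    have htK : t ∉ K := by
      intro hmem
      have := hr hmem
      rw [Metric.mem_closedBall, Real.dist_eq, sub_zero] at this
      linarith
    have h2 := hKt htK
    rw [Real.dist_0_eq_abs] at h2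
    have hpos : 0 < |t| ^ (1 + ε) := Real.rpow_pos_of_pos (by linarith) _
    have h3 : |t| ^ (1 + ε) * f t ≤ 1 := le_of_lt (lt_of_abs_lt h2)
    rw [Real.rpow_neg (abs_nonneg t)]
    calc f t = (|t| ^ (1 + ε) * f t) / (|t| ^ (1 + ε)) := by field_simp
      _ ≤ 1 / |t| ^ (1 + ε) := by gcongr
      _ = (|t| ^ (1 + ε))⁻¹ := one_div _
  -- exponent δ
  obtain ⟨δ, hδdef⟩ : ∃ δ : ℝ, δ = ε / (2 * (1 + ε)) := ⟨_, rfl⟩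
  have hδ0 : 0 < δ := by rw [hδdef]; exact div_pos hε (by linarith)
  have hδ1 : δ < 1 := by
    rw [hδdef, div_lt_one (by linarith)]
    linarith
  have hδe : -(1 + ε) * (1 - δ) = -(1 + ε / 2) := by
    rw [hδdef]
    field_simp
    ring
  -- main estimate
  rw [NormedAddCommGroup.tendsto_nhds_zero]
  intro η hη
  -- choose r
  have hmass : Tendsto (fun r : ℕ => ∫ t in Set.Ioc (-(r : ℝ)) (r : ℝ), f t) atTop (nhds 1) := by
    have hU : (⋃ r : ℕ, Set.Ioc (-(r : ℝ)) (r : ℝ)) = Set.univ := by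
      rw [Set.eq_univ_iff_forall]
      intro x
      obtain ⟨n, hn⟩ := exists_nat_gt |x|
      exact Set.mem_iUnion.2 ⟨n, ⟨by cases abs_lt.mp hn; linarith, (le_abs_self x).trans hn.le⟩⟩
    have := tendsto_setIntegral_of_monotone (μ := volume) (f := f)
      (s := fun r : ℕ => Set.Ioc (-(r : ℝ)) (r : ℝ))
      (fun r => measurableSet_Ioc)
      (fun a b hab => Set.Ioc_subset_Ioc (neg_le_neg (Nat.cast_le.mpr hab)) (Nat.cast_le.mpr hab))
      (by rw [hU]; exact hf_int.integrableOn)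
    rw [hU] at this
    simpa [hf_dens] using this
  have hexp1 : Real.exp (-(η / 3)) < 1 := by
    rw [Real.exp_lt_one_iff]
    linarith
  obtain ⟨rn, hrn_mass, hrn_ge⟩ :=
    ((hmass.eventually (eventually_gt_nhds hexp1)).and
      (eventually_ge_atTop ⌈M⌉₊)).exists
  obtain ⟨r, hrdef⟩ : ∃ r : ℝ, r = (rn : ℝ) := ⟨_, rfl⟩
  have hrM : M ≤ r := by
    rw [hrdef]
    exact le_trans (Nat.le_ceil M) (Nat.cast_le.mpr hrn_ge)
  have hr1 : (1 : ℝ) ≤ r := le_trans hM1 hrM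
  have hr0 : (0 : ℝ) < r := by linarith
  obtain ⟨ρ, hρdef⟩ : ∃ ρ : ℝ, ρ = F r - F (-r) := ⟨_, rfl⟩
  have hρmass : Real.exp (-(η / 3)) < ρ := by
    rw [hρdef, hGioc _ _ (by linarith), hrdef]
    exact hrn_mass
  have hρ0 : 0 < ρ := lt_trans (Real.exp_pos _) hρmass
  have hρ1 : ρ ≤ 1 := by rw [hρdef]; exact hG1 _ _ (by linarith)
  obtain ⟨L, hLdef⟩ : ∃ L : ℝ, L = -Real.log ρ := ⟨_, rfl⟩
  have hL0 : 0 ≤ L := by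
    rw [hLdef, neg_nonneg]
    exact Real.log_nonpos hρ0.le hρ1
  have hLη : L < η / 3 := by
    rw [hLdef, neg_lt]
    rw [← Real.lt_log_iff_exp_lt hρ0] at hρmass
    linarith
  -- the fixed tail integral
  obtain ⟨J, hJdef⟩ : ∃ J : ℝ, J = ∫ s in Set.Ioi r, s ^ (-(1 + ε / 2)) := ⟨_, rfl⟩
  have hJint : IntegrableOn (fun s : ℝ => s ^ (-(1 + ε / 2))) (Set.Ioi r) :=
    integrableOn_Ioi_rpow_of_lt (by linarith) hr0
  have hJ0 : 0 ≤ J := by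
    rw [hJdef]
    exact setIntegral_nonneg measurableSet_Ioi fun s hs =>
      Real.rpow_nonneg (le_of_lt (lt_trans hr0 hs)) _
  -- eventual smallness of the other two terms
  have hev2 : ∀ᶠ i : ℕ in atTop, 8 * r / (2 * (i : ℝ)) < η / 3 := by
    have h0 : Tendsto (fun i : ℕ => 8 * r / (2 * (i : ℝ))) atTop (nhds 0) := by
      have := tendsto_const_div_atTop_nhds_zero_nat (4 * r)
      apply this.congr
      intro i
      rw [show (8:ℝ) * r = 2 * (4 * r) by ring, mul_div_mul_left _ _ (two_ne_zero)]
    exact h0.eventually (eventually_lt_nhds (by linarith))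
  have hev3 : ∀ᶠ i : ℕ in atTop, (2 * (i : ℝ)) ^ (-δ) * (2 * J / δ) < η / 3 := by
    have h1 : Tendsto (fun i : ℕ => (2 * (i : ℝ)) ^ (-δ)) atTop (nhds 0) := by
      apply (tendsto_rpow_neg_atTop hδ0).comp
      exact Tendsto.const_mul_atTop (by norm_num) tendsto_natCast_atTop_atTop
    have h2 := h1.mul_const (2 * J / δ)
    rw [zero_mul] at h2
    exact h2.eventually (eventually_lt_nhds (by linarith))
  filter_upwards [hev2, hev3, eventually_gt_atTop ⌈r⌉₊] with i h2 h3 hir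
  obtain ⟨n, hndef⟩ : ∃ n : ℝ, n = (i : ℝ) := ⟨_, rfl⟩
  rw [← hndef] at h2 h3 ⊢
  have hnr : r < n := by
    rw [hndef]
    exact lt_of_le_of_lt (Nat.le_ceil r) (Nat.cast_lt.mpr hir)
  have hn0 : 0 < n := lt_trans hr0 hnr
  have h2n0 : (0 : ℝ) < 2 * n := by linarith
  obtain ⟨B, hBdef⟩ : ∃ B : ℝ → ℝ,
      B = fun x : ℝ => (F (x + n) - F (x - n)) * Real.log (F (x + n) - F (x - n)) := ⟨_, rfl⟩
  rw [← hBdef]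
  have hBm : Measurable B := by rw [hBdef]; exact hBmeas n
  obtain ⟨Cn, hCdef⟩ : ∃ Cn : ℝ, Cn = (2 * n) ^ (1 - δ) / δ := ⟨_, rfl⟩
  have hCn0 : 0 ≤ Cn := by
    rw [hCdef]
    exact div_nonneg (Real.rpow_nonneg (by linarith) _) hδ0.le
  -- pointwise bounds
  have hBb2 : ∀ x : ℝ, |B x| ≤ 2 := by
    intro x
    rw [hBdef]
    exact aux_entropy2 (hG0 _ _ (by linarith)) (hG1 _ _ (by linarith))
  have hBG : ∀ x : ℝ, 0 ≤ F (x + n) - F (x - n) := fun x => hG0 _ _ (by linarith)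
  have hBG1 : ∀ x : ℝ, F (x + n) - F (x - n) ≤ 1 := fun x => hG1 _ _ (by linarith)
  have hTailR : ∀ x ∈ Set.Ioi (r + n), |B x| ≤ Cn * (x - n) ^ (-(1 + ε / 2)) := by
    intro x hx
    rw [Set.mem_Ioi] at hx
    have hxn : r < x - n := by linarith
    have hxn0 : 0 < x - n := lt_trans hr0 hxn
    have hGle : F (x + n) - F (x - n) ≤ 2 * n * (x - n) ^ (-(1 + ε)) := by
      rw [hGioc _ _ (by linarith : x - n ≤ x + n)]
      have hstep : ∀ t ∈ Set.Ioc (x - n) (x + n), f t ≤ (x - n) ^ (-(1 + ε)) := by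
        intro t ht
        have ht0 : x - n < t := ht.1
        have htpos : 0 < t := lt_trans hxn0 ht0
        have habs : |t| = t := abs_of_pos htpos
        calc f t ≤ |t| ^ (-(1 + ε)) := hMtail t (by rw [habs]; linarith)
          _ ≤ (x - n) ^ (-(1 + ε)) := by
              rw [habs]
              exact Real.rpow_le_rpow_of_nonpos hxn0 ht0.le (by linarith)
      calc (∫ t in Set.Ioc (x - n) (x + n), f t)
          ≤ ∫ _t in Set.Ioc (x - n) (x + n), (x - n) ^ (-(1 + ε)) :=
            setIntegral_mono_on hf_int.integrableOn
              (integrableOn_const (by rw [Real.volume_Ioc]; exact ENNReal.ofReal_ne_top))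
              measurableSet_Ioc hstep
        _ = 2 * n * (x - n) ^ (-(1 + ε)) := by
            rw [setIntegral_const, Real.volume_real_Ioc, smul_eq_mul,
              max_eq_left (by linarith)]
            ring_nf
    have hBx : |B x| = |(F (x + n) - F (x - n)) * Real.log (F (x + n) - F (x - n))| := by
      rw [hBdef]
    rw [hBx]
    calc |(F (x + n) - F (x - n)) * Real.log (F (x + n) - F (x - n))|
        ≤ (F (x + n) - F (x - n)) ^ (1 - δ) / δ :=
          aux_entropy (hBG x) (hBG1 x) hδ0 hδ1
      _ ≤ (2 * n * (x - n) ^ (-(1 + ε))) ^ (1 - δ) / δ := by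
          gcongr
          · exact hBG x
      _ = Cn * (x - n) ^ (-(1 + ε / 2)) := by
          rw [Real.mul_rpow (by linarith) (Real.rpow_nonneg hxn0.le _),
            ← Real.rpow_mul hxn0.le, hδe, hCdef]
          ring
  have hTailL : ∀ x ∈ Set.Iic (-(r + n)), |B x| ≤ Cn * (-x - n) ^ (-(1 + ε / 2)) := by
    intro x hx
    rw [Set.mem_Iic] at hx
    have hxn : r ≤ -x - n := by linarith
    have hxn0 : 0 < -x - n := lt_of_lt_of_le hr0 hxn
    have hGle : F (x + n) - F (x - n) ≤ 2 * n * (-x - n) ^ (-(1 + ε)) := by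
      rw [hGioc _ _ (by linarith : x - n ≤ x + n)]
      have hstep : ∀ t ∈ Set.Ioc (x - n) (x + n), f t ≤ (-x - n) ^ (-(1 + ε)) := by
        intro t ht
        have ht0 : t ≤ x + n := ht.2
        have htneg : t < 0 := by nlinarith
        have habs : |t| = -t := abs_of_neg htneg
        calc f t ≤ |t| ^ (-(1 + ε)) := hMtail t (by rw [habs]; linarith)
          _ ≤ (-x - n) ^ (-(1 + ε)) := by
              rw [habs]
              exact Real.rpow_le_rpow_of_nonpos hxn0 (by linarith) (by linarith)
      calc (∫ t in Set.Ioc (x - n) (x + n), f t)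
          ≤ ∫ _t in Set.Ioc (x - n) (x + n), (-x - n) ^ (-(1 + ε)) :=
            setIntegral_mono_on hf_int.integrableOn
              (integrableOn_const (by rw [Real.volume_Ioc]; exact ENNReal.ofReal_ne_top))
              measurableSet_Ioc hstep
        _ = 2 * n * (-x - n) ^ (-(1 + ε)) := by
            rw [setIntegral_const, Real.volume_real_Ioc, smul_eq_mul,
              max_eq_left (by linarith)]
            ring_nf
    have hBx : |B x| = |(F (x + n) - F (x - n)) * Real.log (F (x + n) - F (x - n))| := by
      rw [hBdef]
    rw [hBx]
    calc |(F (x + n) - F (x - n)) * Real.log (F (x + n) - F (x - n))|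
        ≤ (F (x + n) - F (x - n)) ^ (1 - δ) / δ :=
          aux_entropy (hBG x) (hBG1 x) hδ0 hδ1
      _ ≤ (2 * n * (-x - n) ^ (-(1 + ε))) ^ (1 - δ) / δ := by
          gcongr
          · exact hBG x
      _ = Cn * (-x - n) ^ (-(1 + ε / 2)) := by
          rw [Real.mul_rpow (by linarith) (Real.rpow_nonneg hxn0.le _),
            ← Real.rpow_mul hxn0.le, hδe, hCdef]
          ring
  -- integrability of the dominating tail functions
  have hpreR : (fun x : ℝ => x - n) ⁻¹' (Set.Ioi r) = Set.Ioi (r + n) := aux_pre_sub n r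
  have hIntR : IntegrableOn (fun x : ℝ => (x - n) ^ (-(1 + ε / 2))) (Set.Ioi (r + n)) := by
    rw [← hpreR]
    exact aux_subst_integrable (aux_mp_sub n) (aux_emb_sub n)
      (g := fun s => s ^ (-(1 + ε / 2))) measurableSet_Ioi hJint
  have hIeqR : ∫ x in Set.Ioi (r + n), (x - n) ^ (-(1 + ε / 2)) = J := by
    rw [← hpreR, hJdef]
    exact aux_subst_integral (aux_mp_sub n) (aux_emb_sub n)
      (fun s => s ^ (-(1 + ε / 2))) (Set.Ioi r)
  have hpreL : (fun x : ℝ => -x - n) ⁻¹' (Set.Ioi r) = Set.Iio (-(r + n)) := aux_pre_negsub n r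
  have hIntL' : IntegrableOn (fun x : ℝ => (-x - n) ^ (-(1 + ε / 2))) (Set.Iio (-(r + n))) := by
    rw [← hpreL]
    exact aux_subst_integrable (aux_mp_negsub n) (aux_emb_negsub n)
      (g := fun s => s ^ (-(1 + ε / 2))) measurableSet_Ioi hJint
  have hIntL : IntegrableOn (fun x : ℝ => (-x - n) ^ (-(1 + ε / 2))) (Set.Iic (-(r + n))) :=
    hIntL'.congr_set_ae Iio_ae_eq_Iic.symm
  have hIeqL : ∫ x in Set.Iic (-(r + n)), (-x - n) ^ (-(1 + ε / 2)) = J := by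
    rw [integral_Iic_eq_integral_Iio, ← hpreL, hJdef]
    exact aux_subst_integral (aux_mp_negsub n) (aux_emb_negsub n)
      (fun s => s ^ (-(1 + ε / 2))) (Set.Ioi r)
  -- integrability of B
  have hBintR : IntegrableOn B (Set.Ioi (r + n)) := by
    apply Integrable.mono' (hIntR.const_mul Cn) hBm.aestronglyMeasurable.restrict
    exact (ae_restrict_iff' measurableSet_Ioi).2
      (Filter.Eventually.of_forall fun x hx => by rw [Real.norm_eq_abs]; exact hTailR x hx)
  have hBintL : IntegrableOn B (Set.Iic (-(r + n))) := by
    apply Integrable.mono' (hIntL.const_mul Cn) hBm.aestronglyMeasurable.restrict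
    exact (ae_restrict_iff' measurableSet_Iic).2
      (Filter.Eventually.of_forall fun x hx => by rw [Real.norm_eq_abs]; exact hTailL x hx)
  have hBintM : IntegrableOn B (Set.Ioc (-(r + n)) (r + n)) := by
    apply Measure.integrableOn_of_bounded measure_Ioc_lt_top.ne hBm.aestronglyMeasurable
      (M := 2)
    exact Filter.Eventually.of_forall fun x => by rw [Real.norm_eq_abs]; exact hBb2 x
  have hBint : Integrable B := by
    rw [← integrableOn_univ,
      show (Set.univ : Set ℝ) = Set.Iic (-(r + n)) ∪ (Set.Ioc (-(r + n)) (r + n) ∪ Set.Ioi (r + n))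
        by rw [Set.Ioc_union_Ioi_eq_Ioi (by linarith : -(r + n) ≤ r + n), Set.Iic_union_Ioi]]
    exact hBintL.union (hBintM.union hBintR)
  have hAbsInt : Integrable (fun x => |B x|) := hBint.abs
  -- piecewise bounds on the integral of |B|
  have hconst : ∀ a b : ℝ, a ≤ b → ∀ c : ℝ, (∫ _x in Set.Ioc a b, c) = (b - a) * c := by
    intro a b hab c
    rw [setIntegral_const, Real.volume_real_Ioc, smul_eq_mul, max_eq_left (by linarith)]
  have hP1 : (∫ x in Set.Iic (-(r + n)), |B x|) ≤ Cn * J := by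
    calc (∫ x in Set.Iic (-(r + n)), |B x|)
        ≤ ∫ x in Set.Iic (-(r + n)), Cn * (-x - n) ^ (-(1 + ε / 2)) :=
          setIntegral_mono_on hAbsInt.integrableOn (hIntL.const_mul Cn) measurableSet_Iic
            (fun x hx => hTailL x hx)
      _ = Cn * J := by rw [MeasureTheory.integral_const_mul, hIeqL]
  have hP5 : (∫ x in Set.Ioi (r + n), |B x|) ≤ Cn * J := by
    calc (∫ x in Set.Ioi (r + n), |B x|)
        ≤ ∫ x in Set.Ioi (r + n), Cn * (x - n) ^ (-(1 + ε / 2)) :=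
          setIntegral_mono_on hAbsInt.integrableOn (hIntR.const_mul Cn) measurableSet_Ioi
            (fun x hx => hTailR x hx)
      _ = Cn * J := by rw [MeasureTheory.integral_const_mul, hIeqR]
  have hP2 : (∫ x in Set.Ioc (-(r + n)) (r - n), |B x|) ≤ 4 * r := by
    calc (∫ x in Set.Ioc (-(r + n)) (r - n), |B x|)
        ≤ ∫ _x in Set.Ioc (-(r + n)) (r - n), (2 : ℝ) :=
          setIntegral_mono_on hAbsInt.integrableOn
            (integrableOn_const measure_Ioc_lt_top.ne) measurableSet_Ioc
            (fun x _ => hBb2 x)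
      _ = 4 * r := by rw [hconst _ _ (by linarith)]; ring
  have hP4 : (∫ x in Set.Ioc (n - r) (r + n), |B x|) ≤ 4 * r := by
    calc (∫ x in Set.Ioc (n - r) (r + n), |B x|)
        ≤ ∫ _x in Set.Ioc (n - r) (r + n), (2 : ℝ) :=
          setIntegral_mono_on hAbsInt.integrableOn
            (integrableOn_const measure_Ioc_lt_top.ne) measurableSet_Ioc
            (fun x _ => hBb2 x)
      _ = 4 * r := by rw [hconst _ _ (by linarith)]; ring
  have hP3 : (∫ x in Set.Ioc (r - n) (n - r), |B x|) ≤ 2 * n * L := by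
    have hbound : ∀ x ∈ Set.Ioc (r - n) (n - r), |B x| ≤ L := by
      intro x hx
      obtain ⟨hx1, hx2⟩ := hx
      have hGρ : ρ ≤ F (x + n) - F (x - n) := by
        rw [hρdef, hGioc _ _ (by linarith : -r ≤ r), hGioc _ _ (by linarith : x - n ≤ x + n)]
        exact setIntegral_mono_set hf_int.integrableOn
          (Filter.Eventually.of_forall fun t => hf_nonneg t)
          (HasSubset.Subset.eventuallyLE (Set.Ioc_subset_Ioc (by linarith) (by linarith)))
      have hGpos : 0 < F (x + n) - F (x - n) := lt_of_lt_of_le hρ0 hGρ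
      have hlogG : Real.log (F (x + n) - F (x - n)) ≤ 0 :=
        Real.log_nonpos hGpos.le (hBG1 x)
      have hBx : B x = (F (x + n) - F (x - n)) * Real.log (F (x + n) - F (x - n)) := by
        rw [hBdef]
      rw [hBx]
      calc |(F (x + n) - F (x - n)) * Real.log (F (x + n) - F (x - n))|
          = (F (x + n) - F (x - n)) * (-Real.log (F (x + n) - F (x - n))) := by
            rw [abs_of_nonpos (mul_nonpos_of_nonneg_of_nonpos (hBG x) hlogG)]
            ring
        _ ≤ 1 * (-Real.log (F (x + n) - F (x - n))) :=
            mul_le_mul_of_nonneg_right (hBG1 x) (neg_nonneg.2 hlogG)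
        _ = -Real.log (F (x + n) - F (x - n)) := one_mul _
        _ ≤ L := by
            rw [hLdef]
            exact neg_le_neg (Real.log_le_log hρ0 hGρ)
    calc (∫ x in Set.Ioc (r - n) (n - r), |B x|)
        ≤ ∫ _x in Set.Ioc (r - n) (n - r), L :=
          setIntegral_mono_on hAbsInt.integrableOn
            (integrableOn_const measure_Ioc_lt_top.ne) measurableSet_Ioc hbound
      _ = ((n - r) - (r - n)) * L := hconst _ _ (by linarith) L
      _ ≤ 2 * n * L := mul_le_mul_of_nonneg_right (by linarith) hL0
  -- splitting
  have e1 : (∫ x, |B x|) = (∫ x in Set.Iic (-(r + n)), |B x|)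
      + ((∫ x in Set.Ioc (-(r + n)) (r + n), |B x|) + ∫ x in Set.Ioi (r + n), |B x|) := by
    rw [← intervalIntegral.integral_Iic_add_Ioi (b := -(r + n)) hAbsInt.integrableOn
      hAbsInt.integrableOn]
    congr 1
    rw [← Set.Ioc_union_Ioi_eq_Ioi (by linarith : -(r + n) ≤ r + n),
      setIntegral_union (Set.Ioc_disjoint_Ioi le_rfl) measurableSet_Ioi
        hAbsInt.integrableOn hAbsInt.integrableOn]
  have e2 : (∫ x in Set.Ioc (-(r + n)) (r + n), |B x|)
      = (∫ x in Set.Ioc (-(r + n)) (r - n), |B x|)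
        + ((∫ x in Set.Ioc (r - n) (n - r), |B x|) + ∫ x in Set.Ioc (n - r) (r + n), |B x|) := by
    rw [← Set.Ioc_union_Ioc_eq_Ioc (by linarith : -(r + n) ≤ r - n) (by linarith : r - n ≤ r + n),
      setIntegral_union (Set.Ioc_disjoint_Ioc_of_le le_rfl) measurableSet_Ioc
        hAbsInt.integrableOn hAbsInt.integrableOn,
      ← Set.Ioc_union_Ioc_eq_Ioc (by linarith : r - n ≤ n - r) (by linarith : n - r ≤ r + n),
      setIntegral_union (Set.Ioc_disjoint_Ioc_of_le le_rfl) measurableSet_Ioc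
        hAbsInt.integrableOn hAbsInt.integrableOn]
  have hintabs : (∫ x, |B x|) ≤ 2 * (Cn * J) + 8 * r + 2 * n * L := by
    rw [e1, e2]
    linarith
  -- final arithmetic
  have hpow : (2 * n) ^ ((1 : ℝ) - δ) = (2 * n) * (2 * n) ^ (-δ) := by
    rw [show (1 : ℝ) - δ = 1 + (-δ) by ring, Real.rpow_add h2n0, Real.rpow_one]
  have hterm : (1 / (2 * n)) * (2 * (Cn * J) + 8 * r + 2 * n * L)
      = (2 * n) ^ (-δ) * (2 * J / δ) + 8 * r / (2 * n) + L := by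
    rw [hCdef, hpow]
    field_simp
  have habs_int : |∫ x, B x| ≤ ∫ x, |B x| := by
    have h := norm_integral_le_integral_norm (μ := volume) B
    simpa [Real.norm_eq_abs] using h
  calc ‖-(1 / (2 * n)) * ∫ x, B x‖ = (1 / (2 * n)) * |∫ x, B x| := by
        rw [Real.norm_eq_abs, abs_mul, abs_neg, abs_of_pos (one_div_pos.mpr h2n0)]
    _ ≤ (1 / (2 * n)) * ∫ x, |B x| :=
        mul_le_mul_of_nonneg_left habs_int (le_of_lt (one_div_pos.mpr h2n0))
    _ ≤ (1 / (2 * n)) * (2 * (Cn * J) + 8 * r + 2 * n * L) :=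
        mul_le_mul_of_nonneg_left hintabs (le_of_lt (one_div_pos.mpr h2n0))
    _ = (2 * n) ^ (-δ) * (2 * J / δ) + 8 * r / (2 * n) + L := hterm
    _ < η / 3 + η / 3 + η / 3 := by
        exact add_lt_add (add_lt_add h3 h2) hLη
    _ = η := by ring

/-- For a location model `f(x-θ)` whose density has tails
`|t|^(1+ε) f(t) → 0`, the expected logarithmic discrepancy between the formal
posterior under the uniform prior and the posteriors from the uniform priors
on `[-i,i]` equals `-(1/(2i)) ∫ (F(x+i)-F(x-i)) log(F(x+i)-F(x-i)) dx` and
tends to `0`; hence `π(θ) = 1` is a permissible prior. -/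
theorem stmt_2
    (f : ℝ → ℝ) (hf_meas : Measurable f) (hf_nonneg : ∀ t, 0 ≤ f t)
    (hf_dens : ∫ t, f t = 1)
    (F : ℝ → ℝ) (hF : ∀ x, F x = ∫ t in Set.Iic x, f t)
    (ε : ℝ) (hε : 0 < ε)
    (htail : Tendsto (fun t : ℝ => |t| ^ (1 + ε) * f t) (cocompact ℝ) (nhds 0)) :
    (∀ x : ℝ, Integrable (fun θ : ℝ => f (x - θ))) ∧
    (∀ i : ℕ, 1 ≤ i →
      ∫ x : ℝ,
        (∫ θ in Set.Icc (-(i : ℝ)) (i : ℝ),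
            (f (x - θ) / ((2 * (i : ℝ)) * ((2 * (i : ℝ))⁻¹ * (F (x + i) - F (x - i))))) *
              Real.log
                ((f (x - θ) / ((2 * (i : ℝ)) * ((2 * (i : ℝ))⁻¹ * (F (x + i) - F (x - i))))) /
                  f (x - θ))) *
          ((2 * (i : ℝ))⁻¹ * (F (x + i) - F (x - i)))
        = -(1 / (2 * (i : ℝ))) *
            ∫ x : ℝ, (F (x + i) - F (x - i)) * Real.log (F (x + i) - F (x - i))) ∧
    Tendsto
      (fun i : ℕ =>
        -(1 / (2 * (i : ℝ))) *
          ∫ x : ℝ, (F (x + i) - F (x - i)) * Real.log (F (x + i) - F (x - i)))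
      atTop (nhds 0) := by
  have hf_int : Integrable f := by
    by_contra h
    rw [integral_undef h] at hf_dens
    norm_num at hf_dens
  have hGioc : ∀ a b : ℝ, a ≤ b → F b - F a = ∫ t in Set.Ioc a b, f t := by
    intro a b hab
    rw [hF a, hF b, intervalIntegral.integral_Iic_sub_Iic hf_int.integrableOn hf_int.integrableOn,
      intervalIntegral.integral_of_le hab]
  refine ⟨fun x => hf_int.comp_sub_left x, ?_, ?_⟩
  · intro i hi
    have hn0 : 0 < (i : ℝ) := by exact_mod_cast Nat.pos_of_ne_zero (by omega)
    have key : ∀ x : ℝ,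
        (∫ θ in Set.Icc (-(i : ℝ)) (i : ℝ),
            (f (x - θ) / ((2 * (i : ℝ)) * ((2 * (i : ℝ))⁻¹ * (F (x + i) - F (x - i))))) *
              Real.log
                ((f (x - θ) / ((2 * (i : ℝ)) * ((2 * (i : ℝ))⁻¹ * (F (x + i) - F (x - i))))) /
                  f (x - θ))) *
          ((2 * (i : ℝ))⁻¹ * (F (x + i) - F (x - i)))
        = -(1 / (2 * (i : ℝ))) * ((F (x + i) - F (x - i)) * Real.log (F (x + i) - F (x - i))) := by
      intro x
      set G := F (x + i) - F (x - i) with hGdef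
      have hab : x - (i : ℝ) ≤ x + i := by linarith
      have hG : G = ∫ t in Set.Ioc (x - (i:ℝ)) (x + i), f t := hGioc _ _ hab
      have hsimp : (2 * (i : ℝ)) * ((2 * (i : ℝ))⁻¹ * G) = G := by
        field_simp
      rw [hsimp]
      have hG0 : 0 ≤ G := by
        rw [hG]
        exact setIntegral_nonneg measurableSet_Ioc fun t _ => hf_nonneg t
      rcases hG0.eq_or_lt with hGz | hGpos
      · rw [← hGz]
        simp
      · have hInner : ∀ θ : ℝ,
            f (x - θ) / G * Real.log (f (x - θ) / G / f (x - θ))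
              = -Real.log G / G * f (x - θ) := by
          intro θ
          rcases (hf_nonneg (x - θ)).eq_or_lt with hf0 | hf0
          · rw [← hf0]; simp
          · have h1 : f (x - θ) / G / f (x - θ) = G⁻¹ := by
              rw [div_right_comm, div_self (ne_of_gt hf0), one_div]
            rw [h1, Real.log_inv]
            ring
        simp only [hInner]
        rw [MeasureTheory.integral_const_mul]
        have hIcc : ∫ θ in Set.Icc (-(i : ℝ)) (i : ℝ), f (x - θ) = G := by
          rw [integral_Icc_eq_integral_Ioc,
            ← intervalIntegral.integral_of_le (by linarith : -(i : ℝ) ≤ (i : ℝ)),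
            intervalIntegral.integral_comp_sub_left f x]
          have h2 : x - -(i : ℝ) = x + i := by ring
          rw [h2, intervalIntegral.integral_of_le hab, ← hG]
        rw [hIcc]
        field_simp
    rw [integral_congr_ae (Filter.Eventually.of_forall key), MeasureTheory.integral_const_mul]
  · exact part3core f hf_meas hf_nonneg hf_dens F ε hε htail hf_int hGioc
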